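/- There exist finite alphabets Σ and Γ, a semilinear language L ⊆ Σ*, and a homomorphism h : Γ* → Σ* such that h⁻¹(L) = {w ∈ Γ* : h(w) ∈ L} is not a semilinear language. (That is, the class of semilinear languages is not closed under inverse homomorphism.) -/

import Mathlib

/-- A set `Q ⊆ ℕ^α` is linear if it has a constant vector `v₀` and finitely many
period vectors `v₁, …, v_l` with `Q = {v₀ + i₁v₁ + ⋯ + i_l v_l}`. -/
def IsLinearSetFin {α : Type*} (Q : Set (α → ℕ)) : Prop :=
  ∃ (v₀ : α → ℕ) (l : ℕ) (v : Fin l → α → ℕ),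
    Q = { x | ∃ c : Fin l → ℕ, x = v₀ + ∑ j, c j • v j }

/-- A set is semilinear if it is a finite union of linear sets. -/
def IsSemilinearSetFin {α : Type*} (Q : Set (α → ℕ)) : Prop :=
  ∃ (n : ℕ) (Qs : Fin n → Set (α → ℕ)),
    (∀ i, IsLinearSetFin (Qs i)) ∧ Q = ⋃ i, Qs i

open Classical in
/-- The Parikh image of a word: `parikhWord w a = |w|_a`. -/
noncomputable def parikhWord {σ : Type*} (w : List σ) : σ → ℕ :=
  fun a => w.count a

/-- A language is semilinear if its Parikh image is a semilinear set. -/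
def IsSemilinearLanguage {σ : Type*} (L : Set (List σ)) : Prop :=
  IsSemilinearSetFin (parikhWord '' L)

/- ### Auxiliary material -/

lemma parikhWord_nil {σ : Type*} : parikhWord ([] : List σ) = fun _ => 0 := by
  funext a; simp [parikhWord]

lemma parikhWord_cons {σ : Type*} [DecidableEq σ] (x : σ) (w : List σ) (a : σ) :
    parikhWord (x :: w) a = parikhWord w a + (if x = a then 1 else 0) := by
  simp [parikhWord, List.count_cons]

lemma parikhWord_append {σ : Type*} [DecidableEq σ] (u v : List σ) (a : σ) :
    parikhWord (u ++ v) a = parikhWord u a + parikhWord v a := by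
  simp [parikhWord]

lemma parikhWord_replicate {σ : Type*} [DecidableEq σ] (n : ℕ) (x a : σ) :
    parikhWord (List.replicate n x) a = if x = a then n else 0 := by
  induction n with
  | zero => simp [parikhWord]
  | succ n ih => rw [List.replicate_succ, parikhWord_cons, ih]; split <;> simp

/-- the word `(ab)^n`, with `a = true`, `b = false`. -/
def abn (n : ℕ) : List Bool := (List.replicate n [true, false]).flatten

lemma abn_succ (n : ℕ) : abn (n+1) = true :: false :: abn n := rfl

lemma abn_length (n : ℕ) : (abn n).length = 2 * n := by
  induction n with
  | zero => rfl
  | succ n ih => rw [abn_succ]; simp [ih]; ring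

lemma parikhWord_abn (n : ℕ) : parikhWord (abn n) = fun _ => n := by
  induction n with
  | zero => exact parikhWord_nil
  | succ n ih =>
    funext b
    rw [abn_succ, parikhWord_cons, parikhWord_cons, ih]
    cases b <;> simp

/-- The language: all words except those of the form `(ab)^n` with `n` not a square. -/
def Lng : Set (List Bool) := {w | ∀ n, w = abn n → IsSquare n}

lemma abn_mem_Lng {m : ℕ} : abn m ∈ Lng ↔ IsSquare m := by
  constructor
  · intro h; exact h m rfl
  · intro hs n h
    have hl := congrArg List.length h
    rw [abn_length, abn_length] at hl
    have : m = n := by omega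
    exact this ▸ hs

/-- the Parikh image of `Lng` is everything. -/
lemma parikh_Lng : parikhWord '' Lng = Set.univ := by
  ext g
  simp only [Set.mem_univ, iff_true, Set.mem_image]
  by_cases h : g true = g false
  · -- use the word  false^j ++ true^j
    refine ⟨List.replicate (g false) false ++ List.replicate (g false) true, ?_, ?_⟩
    · intro n hn
      have hl := congrArg List.length hn
      simp [abn_length] at hl
      cases hj : g false with
      | zero =>
        have : n = 0 := by omega
        exact this ▸ (⟨0, rfl⟩ : IsSquare 0)
      | succ k =>
        exfalso
        have hn' : n = g false := by omega
        rw [hn', hj, List.replicate_succ] at hn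
        have : n = k + 1 := by omega
        rw [abn_succ] at hn
        simp at hn
    · funext b
      rw [parikhWord_append, parikhWord_replicate, parikhWord_replicate]
      cases b <;> simp [h]
  · -- use the word  true^i ++ false^j
    refine ⟨List.replicate (g true) true ++ List.replicate (g false) false, ?_, ?_⟩
    · intro n hn
      exfalso
      have ht := congrFun (congrArg parikhWord hn) true
      have hf := congrFun (congrArg parikhWord hn) false
      rw [parikhWord_append, parikhWord_replicate, parikhWord_replicate, parikhWord_abn] at ht hf
      simp at ht hf
      exact h (ht.trans hf.symm)
    · funext b
      rw [parikhWord_append, parikhWord_replicate, parikhWord_replicate]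
      cases b <;> simp

lemma univ_semilinear : IsSemilinearSetFin (Set.univ : Set (Bool → ℕ)) := by
  refine ⟨1, fun _ => Set.univ, fun i => ?_, (Set.iUnion_const Set.univ).symm⟩
  refine ⟨0, 2, ![fun b => bif b then 1 else 0, fun b => bif b then 0 else 1], ?_⟩
  ext x
  simp only [Set.mem_univ, true_iff, Set.mem_setOf_eq]
  refine ⟨![x true, x false], ?_⟩
  funext b
  cases b <;> simp [Fin.sum_univ_two]

lemma join_map_unit (w : List Unit) :
    (w.map (fun _ => [true, false])).flatten = abn w.length := by
  induction w with
  | nil => rfl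
  | cons x w ih => simp only [List.map_cons, List.flatten_cons, List.length_cons, abn_succ, ih]; rfl

lemma parikhWord_unit (w : List Unit) : parikhWord w = fun _ => w.length := by
  induction w with
  | nil => exact parikhWord_nil
  | cons x w ih =>
    funext u
    rw [parikhWord_cons, ih]
    simp

/-- no infinite arithmetic progression consists of squares -/
lemma no_ap_squares {N d : ℕ} (hd : 0 < d) (h : ∀ c : ℕ, IsSquare (N + c * d)) : False := by
  obtain ⟨s, hs⟩ := h d
  obtain ⟨t, ht⟩ := h (d + 1)
  have hsd : d ≤ s := by nlinarith
  have hst : s < t := by nlinarith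
  have h1 : s + 1 ≤ t := hst
  nlinarith

lemma squares_not_semilinear :
    ¬ IsSemilinearSetFin {g : Unit → ℕ | IsSquare (g ())} := by
  rintro ⟨n, Qs, hlin, hU⟩
  have hfin : ∀ i, (Qs i).Finite := by
    intro i
    obtain ⟨v₀, l, v, hQ⟩ := hlin i
    by_cases hz : ∀ j, v j () = 0
    · refine Set.Finite.subset (Set.finite_singleton v₀) ?_
      intro x hx
      rw [hQ] at hx
      obtain ⟨c, hc⟩ := hx
      have hx0 : x = v₀ := by
        funext u; cases u
        have h0 := congrFun hc ()
        simp only [Pi.add_apply, Finset.sum_apply, Pi.smul_apply, smul_eq_mul] at h0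
        rw [h0]
        simp [hz]
      simp [hx0]
    · exfalso
      push_neg at hz
      obtain ⟨j, hj⟩ := hz
      have hsub : Qs i ⊆ {g : Unit → ℕ | IsSquare (g ())} := hU ▸ Set.subset_iUnion Qs i
      refine no_ap_squares (N := v₀ ()) (Nat.pos_of_ne_zero hj) (fun c => ?_)
      have hx : (v₀ + c • v j) ∈ Qs i := by
        rw [hQ]
        refine ⟨fun j' => if j' = j then c else 0, ?_⟩
        congr 1
        rw [← Finset.sum_subset (Finset.subset_univ {j})]
        · simp
        · intro x _ hx; simp at hx; simp [hx]
      have := hsub hx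
      simpa using this
  have hSfin : ({g : Unit → ℕ | IsSquare (g ())}).Finite := hU ▸ Set.finite_iUnion hfin
  have hinf : ({g : Unit → ℕ | IsSquare (g ())}).Infinite := by
    refine Set.infinite_of_injective_forall_mem
      (f := fun k : ℕ => (fun _ => k * k : Unit → ℕ)) ?_ ?_
    · intro a b hab
      have := congrFun hab ()
      simpa [Nat.mul_self_inj] using this
    · intro k
      exact ⟨k, rfl⟩
  exact hinf hSfin

/-- the class of semilinear languages is not closed under inverse
homomorphism: there are finite alphabets σ, γ, a semilinear language L ⊆ σ*, and a
homomorphism h : γ* → σ* (induced by f : γ → σ*) with h⁻¹(L) not semilinear. -/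
theorem semilinear_not_closed_inv_hom :
    ∃ (σ γ : Type) (_ : Fintype σ) (_ : Fintype γ)
      (L : Set (List σ)) (f : γ → List σ),
      IsSemilinearLanguage L ∧
      ¬ IsSemilinearLanguage { w : List γ | (w.map f).flatten ∈ L } := by
  refine ⟨Bool, Unit, inferInstance, inferInstance, Lng, (fun _ => [true, false]), ?_, ?_⟩
  · rw [IsSemilinearLanguage, parikh_Lng]
    exact univ_semilinear
  · have hset : parikhWord '' { w : List Unit | (w.map (fun _ => [true, false])).flatten ∈ Lng }
        = {g : Unit → ℕ | IsSquare (g ())} := by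
      ext g
      simp only [Set.mem_image, Set.mem_setOf_eq]
      constructor
      · rintro ⟨w, hw, rfl⟩
        rw [join_map_unit, abn_mem_Lng] at hw
        rw [parikhWord_unit]
        exact hw
      · intro hg
        refine ⟨List.replicate (g ()) (), ?_, ?_⟩
        · rw [join_map_unit, List.length_replicate, abn_mem_Lng]
          exact hg
        · rw [parikhWord_unit]
          funext u; cases u
          simp
    rw [IsSemilinearLanguage, hset]
    exact squares_not_semilinear
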